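/- Let R̄, Q, I be as in the unitarization of the Radon transform: Q unitary intertwining π and π̂, I a positive self-adjoint operator semi-invariant with weight χ^{-1} such that Qf = I R̄ f for f ∈ dom R̄, and let ψ be an admissible vector for the square-integrable representation π with Qψ ∈ dom I and Ψ = I Qψ. Then for all f ∈ dom R̄ and g ∈ G: ⟨f, π(g)ψ⟩ = χ(g) ⟨R̄f, π̂(g)Ψ⟩, and consequently ‖f‖² = ∫_G χ(g)² |⟨R̄f, π̂(g)Ψ⟩|² dμ(g) and f = ∫_G χ(g) ⟨R̄f, π̂(g)Ψ⟩ π(g)ψ dμ(g) weakly. -/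

import Mathlib

open MeasureTheory LinearPMap
open scoped InnerProductSpace

/-- Inversion formula for the Radon transform: with `Q : L²(X) → L²(Ξ)` unitary intertwining
`π` and `π̂`, `I` a positive self-adjoint operator semi-invariant with weight `χ⁻¹` such that
`Qf = I R̄ f` on `dom R̄`, and `ψ` an admissible vector for the square-integrable irreducible
representation `π` with `Qψ ∈ dom I` and `Ψ = I Qψ`, one has, for all `f ∈ dom R̄` and `g ∈ G`:
`⟨f, π(g)ψ⟩ = χ(g) ⟨R̄f, π̂(g)Ψ⟩`, hence `‖f‖² = ∫_G χ(g)² |⟨R̄f, π̂(g)Ψ⟩|² dμ(g)` and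
`f = ∫_G χ(g) ⟨R̄f, π̂(g)Ψ⟩ π(g)ψ dμ(g)` weakly. -/
theorem radon_inversion_formula
    {G : Type*} [Group G] [TopologicalSpace G] [IsTopologicalGroup G] [LocallyCompactSpace G]
    [MeasurableSpace G] (μ : Measure G)
    (hμleft : ∀ g₀ : G, Measure.map (fun g => g₀ * g) μ = μ)
    {X Ξ : Type*} [MeasurableSpace X] [MeasurableSpace Ξ] (ν : Measure X) (νΞ : Measure Ξ)
    (π : G →* (Lp ℂ 2 ν ≃ₗᵢ[ℂ] Lp ℂ 2 ν)) (πh : G →* (Lp ℂ 2 νΞ ≃ₗᵢ[ℂ] Lp ℂ 2 νΞ))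
    (hirr : ∀ V : Submodule ℂ (Lp ℂ 2 ν), IsClosed (V : Set (Lp ℂ 2 ν)) →
      (∀ g : G, ∀ x ∈ V, π g x ∈ V) → V = ⊥ ∨ V = ⊤)
    (χ : G → ℝ) (hχpos : ∀ g, 0 < χ g) (hχmul : ∀ g₁ g₂, χ (g₁ * g₂) = χ g₁ * χ g₂)
    -- the closed Radon transform and the unitarization
    (Rbar : Lp ℂ 2 ν →ₗ.[ℂ] Lp ℂ 2 νΞ) (hRclosed : Rbar.IsClosed)
    (hRdense : Dense (Rbar.domain : Set (Lp ℂ 2 ν)))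
    (Q : Lp ℂ 2 ν ≃ₗᵢ[ℂ] Lp ℂ 2 νΞ)
    (hQint : ∀ g : G, ∀ x : Lp ℂ 2 ν, Q (π g x) = πh g (Q x))
    (I : Lp ℂ 2 νΞ →ₗ.[ℂ] Lp ℂ 2 νΞ)
    (hIsa : IsSelfAdjoint I)
    (hIpos : ∀ x : I.domain, 0 ≤ (⟪(x : Lp ℂ 2 νΞ), I x⟫_ℂ).re)
    (hIsemi : ∀ g : G, ∀ x : I.domain, ∃ hx' : πh g x ∈ I.domain,
      πh g (I x) = ((χ g : ℂ))⁻¹ • I ⟨πh g x, hx'⟩)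
    (hQR : ∀ x : Rbar.domain, ∃ hx : Rbar x ∈ I.domain, Q (x : Lp ℂ 2 ν) = I ⟨Rbar x, hx⟩)
    -- the admissible vector and the analyzing vector Ψ
    (ψ : Lp ℂ 2 ν)
    (hadm : ∀ f h : Lp ℂ 2 ν,
      ⟪h, f⟫_ℂ = ∫ g : G, ⟪π g ψ, f⟫_ℂ * ⟪h, π g ψ⟫_ℂ ∂μ)
    (hQψ : Q ψ ∈ I.domain) (Ψ : Lp ℂ 2 νΞ) (hΨ : Ψ = I ⟨Q ψ, hQψ⟩) :
    ∀ f : Rbar.domain,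
      (∀ g : G, ⟪π g ψ, (f : Lp ℂ 2 ν)⟫_ℂ = (χ g : ℂ) * ⟪πh g Ψ, Rbar f⟫_ℂ) ∧
      ‖(f : Lp ℂ 2 ν)‖ ^ 2
        = ∫ g : G, (χ g) ^ 2 * ‖(⟪πh g Ψ, Rbar f⟫_ℂ)‖ ^ 2 ∂μ ∧
      (∀ h : Lp ℂ 2 ν,
        ⟪h, (f : Lp ℂ 2 ν)⟫_ℂ
          = ∫ g : G, (χ g : ℂ) * ⟪πh g Ψ, Rbar f⟫_ℂ * ⟪h, π g ψ⟫_ℂ ∂μ) := by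
  -- symmetry of I
  have hIe : I† = I := hIsa
  have hsymI : I.IsFormalAdjoint I := by
    have h1 := LinearPMap.adjoint_isFormalAdjoint (T := I) hIsa.dense_domain
    rwa [hIe] at h1
  intro f
  obtain ⟨hfI, hQf⟩ := hQR f
  have key : ∀ g : G, ⟪π g ψ, (f : Lp ℂ 2 ν)⟫_ℂ = (χ g : ℂ) * ⟪πh g Ψ, Rbar f⟫_ℂ := by
    intro g
    obtain ⟨hx', hsemi⟩ := hIsemi g ⟨Q ψ, hQψ⟩
    have hχne : (χ g : ℂ) ≠ 0 := by
      exact_mod_cast (hχpos g).ne'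
    have hIval : I ⟨πh g (Q ψ), hx'⟩ = (χ g : ℂ) • πh g Ψ := by
      rw [hΨ, hsemi, smul_smul, mul_inv_cancel₀ hχne, one_smul]
    calc ⟪π g ψ, (f : Lp ℂ 2 ν)⟫_ℂ
        = ⟪Q (π g ψ), Q (f : Lp ℂ 2 ν)⟫_ℂ := (Q.inner_map_map _ _).symm
      _ = ⟪πh g (Q ψ), I ⟨Rbar f, hfI⟩⟫_ℂ := by rw [hQint, hQf]
      _ = ⟪(I ⟨πh g (Q ψ), hx'⟩ : Lp ℂ 2 νΞ), ((⟨Rbar f, hfI⟩ : I.domain) : Lp ℂ 2 νΞ)⟫_ℂ :=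
          (hsymI ⟨πh g (Q ψ), hx'⟩ ⟨Rbar f, hfI⟩).symm
      _ = ⟪(χ g : ℂ) • πh g Ψ, Rbar f⟫_ℂ := by rw [hIval]
      _ = (χ g : ℂ) * ⟪πh g Ψ, Rbar f⟫_ℂ := by
          rw [inner_smul_left, Complex.conj_ofReal]
  refine ⟨key, ?_, ?_⟩
  · have h2 : ⟪(f : Lp ℂ 2 ν), (f : Lp ℂ 2 ν)⟫_ℂ
        = ∫ g : G, ((χ g ^ 2 * ‖(⟪πh g Ψ, Rbar f⟫_ℂ)‖ ^ 2 : ℝ) : ℂ) ∂μ := by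
      rw [hadm (f : Lp ℂ 2 ν) (f : Lp ℂ 2 ν)]
      congr 1
      funext g
      have hc : ⟪(f : Lp ℂ 2 ν), π g ψ⟫_ℂ
          = (starRingEnd ℂ) ⟪π g ψ, (f : Lp ℂ 2 ν)⟫_ℂ := (inner_conj_symm _ _).symm
      rw [hc, key g, map_mul, Complex.conj_ofReal]
      rw [show ((χ g : ℂ) * ⟪πh g Ψ, Rbar f⟫_ℂ) * ((χ g : ℂ) *
            (starRingEnd ℂ) ⟪πh g Ψ, Rbar f⟫_ℂ)
          = ((χ g : ℂ) * (χ g : ℂ)) *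
            (⟪πh g Ψ, Rbar f⟫_ℂ * (starRingEnd ℂ) ⟪πh g Ψ, Rbar f⟫_ℂ) by ring]
      rw [Complex.mul_conj, Complex.normSq_eq_norm_sq]
      push_cast
      ring
    have h3 : ⟪(f : Lp ℂ 2 ν), (f : Lp ℂ 2 ν)⟫_ℂ = ((‖(f : Lp ℂ 2 ν)‖ ^ 2 : ℝ) : ℂ) := by
      rw [inner_self_eq_norm_sq_to_K]
      norm_cast
    have h4 : (∫ g : G, ((χ g ^ 2 * ‖(⟪πh g Ψ, Rbar f⟫_ℂ)‖ ^ 2 : ℝ) : ℂ) ∂μ)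
        = ((∫ g : G, (χ g ^ 2 * ‖(⟪πh g Ψ, Rbar f⟫_ℂ)‖ ^ 2 : ℝ) ∂μ : ℝ) : ℂ) :=
      Complex.ofRealLI.integral_comp_comm _
    rw [h3, h4] at h2
    exact_mod_cast h2
  · intro h
    rw [hadm (f : Lp ℂ 2 ν) h]
    congr 1
    funext g
    rw [key g, mul_assoc]
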